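/- Let C be a coalgebra in a cocomplete abelian monoidal category M with left exact tensor functors, M a C-bicomodule, and T = T_C^c(M) the cotensor coalgebra. If E is a coalgebra and α, β : E → T are coalgebra homomorphisms with p_1 ∘ α = p_1 ∘ β, then p_n ∘ α = p_n ∘ β for every n ≥ 1. -/

import Mathlib

open CategoryTheory CategoryTheory.Limits MonoidalCategory

universe v u

variable {M : Type u} [Category.{v} M] [MonoidalCategory M] [Abelian M]
  [MonoidalPreadditive M] [HasColimits M]

/-- Projection `p_n : ⊕_m P_m ⟶ P_n` of the coproduct in a preadditive category. -/
noncomputable def πT (P : ℕ → M) (n : ℕ) : (∐ P) ⟶ P n :=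
  Sigma.desc fun m => if h : m = n then eqToHom (congrArg P h) else 0

/-- Truncated deconcatenation morphism `P t ⟶ P r ⊗ P (t-r)` (zero when `r > t`),
where `D r s : M^{□(r+s)} ⟶ M^{□r} ⊗ M^{□s}` are the deconcatenation morphisms of the
cotensor powers (`P 0 = C`, `P n = M^{□n}`). -/
noncomputable def dron (P : ℕ → M) (D : ∀ r s : ℕ, P (r + s) ⟶ P r ⊗ P s) (t r : ℕ) :
    P t ⟶ P r ⊗ P (t - r) :=
  if h : r ≤ t then eqToHom (congrArg P (by omega : t = r + (t - r))) ≫ D r (t - r)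
  else 0


lemma ι_πT (P : ℕ → M) (m n : ℕ) :
    Sigma.ι P m ≫ πT P n = if h : m = n then eqToHom (congrArg P h) else 0 := by
  simp [πT]

lemma keyT (P : ℕ → M) (D : ∀ r s : ℕ, P (r + s) ⟶ P r ⊗ P s)
    (ΔT : (∐ P) ⟶ (∐ P) ⊗ (∐ P))
    (hΔ : ∀ t : ℕ, Sigma.ι P t ≫ ΔT =
      ∑ r ∈ Finset.range (t + 1),
        dron P D t r ≫ (Sigma.ι P r ⊗ₘ Sigma.ι P (t - r))) (n : ℕ) (hn : 1 ≤ n) :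
    ΔT ≫ (πT P 1 ⊗ₘ πT P n) = πT P (1 + n) ≫ D 1 n := by
  apply Sigma.hom_ext
  intro t
  rw [← Category.assoc, hΔ t, Preadditive.sum_comp, ← Category.assoc, ι_πT]
  by_cases ht : t = 1 + n
  · subst ht
    rw [dif_pos rfl, eqToHom_refl, Category.id_comp]
    rw [Finset.sum_eq_single 1]
    · rw [Category.assoc, tensorHom_comp_tensorHom, ι_πT, ι_πT, dif_pos rfl,
        dif_pos (by omega : 1 + n - 1 = n)]
      simp [dron, dif_pos (by omega : 1 ≤ 1 + n)]
    · intro r hr hr1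
      rw [Category.assoc, tensorHom_comp_tensorHom, ι_πT, dif_neg hr1]
      simp
    · intro h; exact absurd (Finset.mem_range.mpr (by omega)) h
  · rw [dif_neg ht, zero_comp]
    apply Finset.sum_eq_zero
    intro r hr
    rw [Category.assoc, tensorHom_comp_tensorHom]
    by_cases hr1 : r = 1
    · subst hr1
      rw [ι_πT P (t - 1) n, dif_neg (by simp at hr; omega : t - 1 ≠ n)]
      simp
    · rw [ι_πT P r 1, dif_neg hr1]
      simp

/-- Let `T = T_C^c(M) = ⊕_n M^{□n}` be the cotensor coalgebra of a
`C`-bicomodule `M` in a cocomplete abelian monoidal category with left exact tensor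
functors (so that the morphisms `χ_M □ M^{□(n-1)} = D 1 n` are monomorphisms).  If `E` is a
coalgebra and `α, β : E ⟶ T` are coalgebra homomorphisms with `p₁ ∘ α = p₁ ∘ β`, then
`p_n ∘ α = p_n ∘ β` for every `n ≥ 1`. -/
theorem stmt18
    [∀ X : M, PreservesFiniteLimits (tensorLeft X)]
    [∀ X : M, PreservesFiniteLimits (tensorRight X)]
    (P : ℕ → M) (D : ∀ r s : ℕ, P (r + s) ⟶ P r ⊗ P s)
    (hmono : ∀ n : ℕ, 1 ≤ n → Mono (D 1 n))
    (ε0 : P 0 ⟶ 𝟙_ M)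
    (ΔT : (∐ P) ⟶ (∐ P) ⊗ (∐ P)) (εT : (∐ P) ⟶ 𝟙_ M)
    (hcoassoc : ΔT ≫ (ΔT ▷ (∐ P)) ≫ (α_ _ _ _).hom = ΔT ≫ ((∐ P) ◁ ΔT))
    (hcol : ΔT ≫ (εT ▷ (∐ P)) = (λ_ (∐ P)).inv)
    (hcor : ΔT ≫ ((∐ P) ◁ εT) = (ρ_ (∐ P)).inv)
    (hε : εT = πT P 0 ≫ ε0)
    (hΔ : ∀ t : ℕ, Sigma.ι P t ≫ ΔT =
      ∑ r ∈ Finset.range (t + 1),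
        dron P D t r ≫ (Sigma.ι P r ⊗ₘ Sigma.ι P (t - r)))
    -- a coalgebra `E` and two coalgebra homomorphisms `α, β : E ⟶ T`
    (E : Comon M) (a b : E.X ⟶ ∐ P)
    (ha₁ : a ≫ ΔT = ComonObj.comul (X := E.X) ≫ (a ⊗ₘ a)) (ha₂ : a ≫ εT = ComonObj.counit (X := E.X))
    (hb₁ : b ≫ ΔT = ComonObj.comul (X := E.X) ≫ (b ⊗ₘ b)) (hb₂ : b ≫ εT = ComonObj.counit (X := E.X))
    (h1 : a ≫ πT P 1 = b ≫ πT P 1) :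
    ∀ n : ℕ, 1 ≤ n → a ≫ πT P n = b ≫ πT P n := by
  intro n
  induction n with
  | zero => intro h; omega
  | succ n ih =>
    intro _
    by_cases hn : n = 0
    · subst hn; exact h1
    · have hn1 : 1 ≤ n := by omega
      have := hmono n hn1
      have key := keyT P D ΔT hΔ n hn1
      have h2 : a ≫ πT P (1 + n) ≫ D 1 n = b ≫ πT P (1 + n) ≫ D 1 n := by
        rw [← key, ← Category.assoc, ha₁, ← Category.assoc, hb₁,
          Category.assoc, Category.assoc, tensorHom_comp_tensorHom, tensorHom_comp_tensorHom, h1, ih hn1]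
      rw [← Category.assoc, ← Category.assoc] at h2
      have h3 := (cancel_mono (D 1 n)).mp h2
      rw [Nat.add_comm] at h3
      exact h3
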